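/- The function g(x) = x^{1/φ} on [0,1], where φ = (1+√5)/2, satisfies the integro-differential equation g'(x) = μ / g(g(x)) for x ∈ (0,1), where μ = g'(1) = 1/φ, with g(0) = 0 and g(1) = 1. -/

import Mathlib

theorem power_law_solves_integro_differential_equation :
    let φ : ℝ := (1 + Real.sqrt 5) / 2
    let g : ℝ → ℝ := fun x => x ^ (1 / φ)
    let μ : ℝ := 1 / φ
    g 0 = 0 ∧ g 1 = 1 ∧ deriv g 1 = μ ∧
      ∀ x ∈ Set.Ioo (0:ℝ) 1, HasDerivAt g (μ / g (g x)) x := by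
  intro φ g μ
  have hs : Real.sqrt 5 ^ 2 = 5 := Real.sq_sqrt (by norm_num)
  have hs0 : (0:ℝ) ≤ Real.sqrt 5 := Real.sqrt_nonneg 5
  have hφ : (0:ℝ) < φ := by
    show (0:ℝ) < (1 + Real.sqrt 5) / 2
    positivity
  have hφne : φ ≠ 0 := ne_of_gt hφ
  have hkey : 1 / φ * (1 / φ) + 1 / φ = 1 := by
    show 1 / ((1 + Real.sqrt 5) / 2) * (1 / ((1 + Real.sqrt 5) / 2)) +
      1 / ((1 + Real.sqrt 5) / 2) = 1
    have h1 : (1 + Real.sqrt 5) / 2 ≠ 0 := hφne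
    field_simp
    nlinarith [hs]
  have hpos : (0:ℝ) < 1 / φ := by positivity
  have hderiv : ∀ x : ℝ, 0 < x → HasDerivAt g (1 / φ * x ^ (1 / φ - 1)) x := by
    intro x hx
    exact (Real.hasDerivAt_rpow_const (Or.inl (ne_of_gt hx))).congr_deriv (by ring)
  refine ⟨?_, ?_, ?_, ?_⟩
  · show (0:ℝ) ^ (1 / φ) = 0
    exact Real.zero_rpow (ne_of_gt hpos)
  · show (1:ℝ) ^ (1 / φ) = 1
    exact Real.one_rpow _
  · have h := hderiv 1 one_pos
    rw [h.deriv]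
    simp [μ, Real.one_rpow, one_div]
  · intro x hx
    have hx0 : 0 < x := hx.1
    have h := hderiv x hx0
    convert h using 1
    show μ / (x ^ (1 / φ)) ^ (1 / φ) = 1 / φ * x ^ (1 / φ - 1)
    rw [← Real.rpow_mul hx0.le]
    have he : 1 / φ - 1 = -(1 / φ * (1 / φ)) := by linarith [hkey]
    rw [he, Real.rpow_neg hx0.le]
    field_simp [μ]
    exact one_div_mul_cancel hφne
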